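/- Let f : ℝ → ℝ be a convex function with f(0) ≤ 0, let A be an n×n Hermitian complex matrix, and let Z be an n×n complex matrix which is a contraction (operator norm at most 1). Set X = f(Zᴴ A Z) and Y = Zᴴ f(A) Z. Then there exist n×n unitary matrices U and V such that X ≤ (U Y Uᴴ + V Y Vᴴ)/2 in the Loewner order. -/

import Mathlib

open Matrix
open scoped ComplexOrder

/-- The `j`-th largest eigenvalue of a Hermitian matrix (`0`-indexed, so `eigDesc hA ⟨0, _⟩`
is the largest), counted with multiplicity. -/
noncomputable def eigDesc {n : ℕ} {A : Matrix (Fin n) (Fin n) ℂ} (hA : A.IsHermitian)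
    (j : Fin n) : ℝ :=
  hA.eigenvalues (Tuple.sort hA.eigenvalues j.rev)

/-- Applying a real function to a Hermitian matrix via the functional calculus yields a
Hermitian matrix. -/
lemma isHermitian_cfc {n : ℕ} {A : Matrix (Fin n) (Fin n) ℂ} (hA : A.IsHermitian)
    (f : ℝ → ℝ) : (hA.cfc f).IsHermitian := by
  rw [← hA.cfc_eq]
  exact cfc_predicate f A

lemma isHermitian_half_smul {n : ℕ} {X : Matrix (Fin n) (Fin n) ℂ} (hX : X.IsHermitian) :
    ((2 : ℝ)⁻¹ • X).IsHermitian := by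
  show _ = _
  rw [Matrix.conjTranspose_smul, star_trivial, hX.eq]

lemma isHermitian_sum_conj {m n : ℕ} {A : Fin m → Matrix (Fin n) (Fin n) ℂ}
    (Z : Fin m → Matrix (Fin n) (Fin n) ℂ) (hA : ∀ i, (A i).IsHermitian) :
    (∑ i, (Z i)ᴴ * A i * Z i).IsHermitian := by
  show _ = _
  rw [Matrix.conjTranspose_sum]
  exact Finset.sum_congr rfl fun i _ => (isHermitian_conjTranspose_mul_mul (Z i) (hA i)).eq

section Aux
variable {n : ℕ}
lemma dot_conj (N M : Matrix (Fin n) (Fin n) ℂ) (x : Fin n → ℂ) :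
    star x ⬝ᵥ ((N * M * Nᴴ) *ᵥ x) = star (Nᴴ *ᵥ x) ⬝ᵥ (M *ᵥ (Nᴴ *ᵥ x)) := by
  rw [star_mulVec, ← mulVec_mulVec, ← mulVec_mulVec, dotProduct_mulVec, conjTranspose_conjTranspose]

lemma dot_diag (v : Fin n → ℝ) (z : Fin n → ℂ) :
    star z ⬝ᵥ (diagonal (Complex.ofReal ∘ v) *ᵥ z) =
      ((∑ i, v i * Complex.normSq (z i) : ℝ) : ℂ) := by
  rw [Complex.ofReal_sum]
  simp only [dotProduct, mulVec_diagonal, Function.comp_apply, Pi.star_apply]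
  refine Finset.sum_congr rfl fun i _ => ?_
  rw [Complex.ofReal_mul, ← Complex.mul_conj (z i)]
  simp only [RCLike.star_def]
  ring

lemma dot_self' (z : Fin n → ℂ) :
    star z ⬝ᵥ z = ((∑ i, Complex.normSq (z i) : ℝ) : ℂ) := by
  rw [Complex.ofReal_sum]
  simp only [dotProduct, Pi.star_apply]
  refine Finset.sum_congr rfl fun i _ => ?_
  rw [← Complex.mul_conj (z i)]
  simp only [RCLike.star_def]
  ring

lemma spectral' {B : Matrix (Fin n) (Fin n) ℂ} (hB : B.IsHermitian) :
    B = (hB.eigenvectorUnitary : Matrix (Fin n) (Fin n) ℂ) *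
      diagonal (Complex.ofReal ∘ hB.eigenvalues) *
      (hB.eigenvectorUnitary : Matrix (Fin n) (Fin n) ℂ)ᴴ := hB.spectral_theorem

lemma cfc_eq' {B : Matrix (Fin n) (Fin n) ℂ} (hB : B.IsHermitian) (f : ℝ → ℝ) :
    hB.cfc f = (hB.eigenvectorUnitary : Matrix (Fin n) (Fin n) ℂ) *
      diagonal (Complex.ofReal ∘ (f ∘ hB.eigenvalues)) *
      (hB.eigenvectorUnitary : Matrix (Fin n) (Fin n) ℂ)ᴴ := rfl

lemma unitary_mulVec_conjTranspose {Q : Matrix (Fin n) (Fin n) ℂ}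
    (hQ : Q ∈ Matrix.unitaryGroup (Fin n) ℂ) (v : Fin n → ℂ) :
    Qᴴ *ᵥ (Q *ᵥ v) = v := by
  rw [mulVec_mulVec, ← Matrix.star_eq_conjTranspose, Matrix.mem_unitaryGroup_iff'.mp hQ, one_mulVec]

lemma unitary_conj_eq_one {Q : Matrix (Fin n) (Fin n) ℂ}
    (hQ : Q ∈ Matrix.unitaryGroup (Fin n) ℂ) : Q * 1 * Qᴴ = 1 := by
  rw [mul_one, ← Matrix.star_eq_conjTranspose, Matrix.mem_unitaryGroup_iff.mp hQ]

lemma sum_normSq_eq {Q : Matrix (Fin n) (Fin n) ℂ}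
    (hQ : Q ∈ Matrix.unitaryGroup (Fin n) ℂ) (x : Fin n → ℂ) :
    (∑ i, Complex.normSq ((Qᴴ *ᵥ x) i)) = ∑ i, Complex.normSq (x i) := by
  have h := dot_conj Q 1 x
  rw [unitary_conj_eq_one hQ, one_mulVec, one_mulVec, dot_self', dot_self'] at h
  exact_mod_cast h.symm


lemma unitary_mulVec_conjTranspose' {Q : Matrix (Fin n) (Fin n) ℂ}
    (hQ : Q ∈ Matrix.unitaryGroup (Fin n) ℂ) (v : Fin n → ℂ) :
    Q *ᵥ (Qᴴ *ᵥ v) = v := by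
  rw [mulVec_mulVec, ← Matrix.star_eq_conjTranspose, Matrix.mem_unitaryGroup_iff.mp hQ, one_mulVec]

lemma sum_normSq_mulVec {Q : Matrix (Fin n) (Fin n) ℂ}
    (hQ : Q ∈ Matrix.unitaryGroup (Fin n) ℂ) (v : Fin n → ℂ) :
    (∑ i, Complex.normSq ((Q *ᵥ v) i)) = ∑ i, Complex.normSq (v i) := by
  have h := sum_normSq_eq hQ (Q *ᵥ v)
  rw [unitary_mulVec_conjTranspose hQ v] at h
  exact h.symm


lemma permMatrix_conjTranspose (σ : Equiv.Perm (Fin n)) :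
    (σ.permMatrix ℂ)ᴴ = (σ⁻¹).permMatrix ℂ := by
  ext i j
  simp [Equiv.Perm.permMatrix, conjTranspose_apply, PEquiv.toMatrix_apply,
    Equiv.toPEquiv_apply, Option.mem_def, eq_comm, Equiv.eq_symm_apply]

lemma permMatrix_mem_unitaryGroup (σ : Equiv.Perm (Fin n)) :
    σ.permMatrix ℂ ∈ Matrix.unitaryGroup (Fin n) ℂ := by
  rw [Matrix.mem_unitaryGroup_iff, Matrix.star_eq_conjTranspose, permMatrix_conjTranspose,
    Equiv.Perm.permMatrix, Equiv.Perm.permMatrix, PEquiv.mul_toMatrix_toPEquiv]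
  ext i j
  simp [PEquiv.toMatrix_apply, Equiv.toPEquiv_apply, Matrix.one_apply, ← Equiv.Perm.inv_def,
    inv_inv, σ.injective.eq_iff]

lemma perm_conj_diagonal (σ : Equiv.Perm (Fin n)) (v : Fin n → ℂ) :
    ((σ⁻¹).permMatrix ℂ) * diagonal (v ∘ σ) * ((σ⁻¹).permMatrix ℂ)ᴴ = diagonal v := by
  rw [permMatrix_conjTranspose, inv_inv, Equiv.Perm.permMatrix, Equiv.Perm.permMatrix,
    PEquiv.toMatrix_toPEquiv_mul, PEquiv.mul_toMatrix_toPEquiv, Matrix.submatrix_submatrix]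
  simp only [Function.comp_id, Function.id_comp, ← Equiv.Perm.inv_def, inv_inv]
  rw [Matrix.submatrix_diagonal _ _ (Equiv.injective _)]
  ext i j
  rcases eq_or_ne i j with h|h
  · subst h; simp
  · simp [diagonal_apply_ne _ h]

lemma count_comp_perm (v : Fin n → ℝ) (σ : Equiv.Perm (Fin n)) (c : ℝ) :
    (Finset.univ.filter (fun i => c ≤ v (σ i))).card =
      (Finset.univ.filter (fun i => c ≤ v i)).card := by
  apply Finset.card_nbij (i := fun i => σ i)
  · intro a ha; simp at ha ⊢; exact ha
  · intro a _ b _ h; exact σ.injective h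
  · intro b hb; refine ⟨σ⁻¹ b, by simp at hb ⊢; simpa using hb, by simp⟩

lemma monotone_le_of_count_le {u v : Fin n → ℝ} (hu : Monotone u) (hv : Monotone v)
    (h : ∀ c : ℝ, (Finset.univ.filter (fun i => c ≤ u i)).card ≤
      (Finset.univ.filter (fun i => c ≤ v i)).card) : ∀ j, u j ≤ v j := by
  intro j
  by_contra hc
  push_neg at hc
  set c := u j with hcdef
  have h1 : (Finset.Ici j) ⊆ Finset.univ.filter (fun i => c ≤ u i) := by
    intro i hi
    simp only [Finset.mem_Ici] at hi
    simp [hcdef, hu hi]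
  have h2 : Finset.univ.filter (fun i => c ≤ v i) ⊆ Finset.Ioi j := by
    intro i hi
    simp only [Finset.mem_filter] at hi
    simp only [Finset.mem_Ioi]
    by_contra hij
    push_neg at hij
    exact absurd (le_trans hi.2 (hv hij)) (not_le.2 hc)
  have := le_trans (Finset.card_le_card h1) (le_trans (h c) (Finset.card_le_card h2))
  rw [Fin.card_Ici, Fin.card_Ioi] at this
  have := j.isLt
  omega

lemma dot_parallelogram (Y : Matrix (Fin n) (Fin n) ℂ) (u v : Fin n → ℂ) :
    star (u + v) ⬝ᵥ (Y *ᵥ (u + v)) + star (u - v) ⬝ᵥ (Y *ᵥ (u - v)) =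
      2 * (star u ⬝ᵥ (Y *ᵥ u)) + 2 * (star v ⬝ᵥ (Y *ᵥ v)) := by
  simp only [mulVec_add, mulVec_sub, star_add, star_sub, add_dotProduct, sub_dotProduct,
    dotProduct_add, dotProduct_sub]
  ring

section Convex
variable {f : ℝ → ℝ} (hf : ConvexOn ℝ Set.univ f)

include hf in
lemma conv_mono_right {a x y : ℝ} (hax : a ≤ x) (hxy : x ≤ y) (hay : f a ≤ f y) : f x ≤ f y := by
  have hseg : x ∈ segment ℝ a y := by
    rw [segment_eq_Icc (le_trans hax hxy)]
    exact ⟨hax, hxy⟩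
  have := hf.le_on_segment (Set.mem_univ a) (Set.mem_univ y) hseg
  rw [max_eq_right hay] at this
  exact this

include hf in
lemma conv_mono_left {a x y : ℝ} (hxa : x ≤ a) (hyx : y ≤ x) (hay : f a ≤ f y) : f x ≤ f y := by
  have hseg : x ∈ segment ℝ y a := by
    rw [segment_eq_Icc (le_trans hyx hxa)]
    exact ⟨hyx, hxa⟩
  have := hf.le_on_segment (Set.mem_univ y) (Set.mem_univ a) hseg
  rw [max_eq_left hay] at this
  exact this

include hf in
/-- If all weights are supported where `a ≤ v i` and `c ≤ f (v i)`, and `a` is a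
minimum of `f` on `[lo, hi] ⊇ range v ∪ {a}`, then `c ≤ f (∑ w i * v i)`. -/
lemma branch_bound_right {lo hi a c : ℝ} (ha : a ∈ Set.Icc lo hi)
    (hamin : ∀ x ∈ Set.Icc lo hi, f a ≤ f x)
    {v w : Fin n → ℝ} (hv : ∀ i, v i ∈ Set.Icc lo hi)
    (hw0 : ∀ i, 0 ≤ w i) (hw1 : ∑ i, w i = 1)
    (hsupp : ∀ i, w i ≠ 0 → a ≤ v i ∧ c ≤ f (v i)) :
    c ≤ f (∑ i, w i * v i) := by
  classical
  set r := ∑ i, w i * v i with hrdef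
  have hJne : ∃ i, w i ≠ 0 := by
    by_contra hall
    push_neg at hall
    rw [Finset.sum_congr rfl (fun i _ => hall i)] at hw1
    simp at hw1
  set J := Finset.univ.filter (fun i => w i ≠ 0) with hJdef
  have hJne' : J.Nonempty := by
    obtain ⟨i, hi⟩ := hJne
    exact ⟨i, by simp [hJdef, hi]⟩
  obtain ⟨i1, hi1J, hi1min⟩ := J.exists_min_image v hJne'
  have hi1w : w i1 ≠ 0 := by simpa [hJdef] using hi1J
  have hi1 := hsupp i1 hi1w
  -- r ≥ v i1
  have hrge : v i1 ≤ r := by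
    have hsplit : r - v i1 = ∑ i, w i * (v i - v i1) := by
      simp only [mul_sub]
      rw [Finset.sum_sub_distrib, ← Finset.sum_mul, hw1, one_mul]
    have hnn : 0 ≤ ∑ i, w i * (v i - v i1) := by
      apply Finset.sum_nonneg
      intro i _
      rcases eq_or_ne (w i) 0 with h | h
      · simp [h]
      · apply mul_nonneg (hw0 i)
        have hiJ : i ∈ J := by simp [hJdef, h]
        linarith [hi1min i hiJ]
    linarith
  have hrle : r ≤ hi := by
    have hsplit : hi - r = ∑ i, w i * (hi - v i) := by
      simp only [mul_sub]
      rw [Finset.sum_sub_distrib, ← Finset.sum_mul, hw1, one_mul]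
    have hnn : 0 ≤ ∑ i, w i * (hi - v i) := by
      apply Finset.sum_nonneg
      intro i _
      exact mul_nonneg (hw0 i) (by linarith [(hv i).2])
    linarith
  have hrIcc : r ∈ Set.Icc lo hi := ⟨le_trans ha.1 (le_trans hi1.1 hrge), hrle⟩
  calc c ≤ f (v i1) := hi1.2
    _ ≤ f r := conv_mono_right hf hi1.1 hrge (hamin r hrIcc)

include hf in
/-- Mirror version: weights supported where `v i ≤ a`. -/
lemma branch_bound_left {lo hi a c : ℝ} (ha : a ∈ Set.Icc lo hi)
    (hamin : ∀ x ∈ Set.Icc lo hi, f a ≤ f x)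
    {v w : Fin n → ℝ} (hv : ∀ i, v i ∈ Set.Icc lo hi)
    (hw0 : ∀ i, 0 ≤ w i) (hw1 : ∑ i, w i = 1)
    (hsupp : ∀ i, w i ≠ 0 → v i ≤ a ∧ c ≤ f (v i)) :
    c ≤ f (∑ i, w i * v i) := by
  classical
  set r := ∑ i, w i * v i with hrdef
  have hJne : ∃ i, w i ≠ 0 := by
    by_contra hall
    push_neg at hall
    rw [Finset.sum_congr rfl (fun i _ => hall i)] at hw1
    simp at hw1
  set J := Finset.univ.filter (fun i => w i ≠ 0) with hJdef
  have hJne' : J.Nonempty := by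
    obtain ⟨i, hi⟩ := hJne
    exact ⟨i, by simp [hJdef, hi]⟩
  obtain ⟨i1, hi1J, hi1max⟩ := J.exists_max_image v hJne'
  have hi1w : w i1 ≠ 0 := by simpa [hJdef] using hi1J
  have hi1 := hsupp i1 hi1w
  have hrle : r ≤ v i1 := by
    have hsplit : v i1 - r = ∑ i, w i * (v i1 - v i) := by
      simp only [mul_sub]
      rw [Finset.sum_sub_distrib, ← Finset.sum_mul, hw1, one_mul]
    have hnn : 0 ≤ ∑ i, w i * (v i1 - v i) := by
      apply Finset.sum_nonneg
      intro i _
      rcases eq_or_ne (w i) 0 with h | h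
      · simp [h]
      · apply mul_nonneg (hw0 i)
        have hiJ : i ∈ J := by simp [hJdef, h]
        linarith [hi1max i hiJ]
    linarith
  have hrge : lo ≤ r := by
    have hsplit : r - lo = ∑ i, w i * (v i - lo) := by
      simp only [mul_sub]
      rw [Finset.sum_sub_distrib, ← Finset.sum_mul, hw1, one_mul]
    have hnn : 0 ≤ ∑ i, w i * (v i - lo) := by
      apply Finset.sum_nonneg
      intro i _
      exact mul_nonneg (hw0 i) (by linarith [(hv i).1])
    linarith
  have hrIcc : r ∈ Set.Icc lo hi := ⟨hrge, le_trans hrle (le_trans hi1.1 ha.2)⟩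
  calc c ≤ f (v i1) := hi1.2
    _ ≤ f r := conv_mono_left hf hi1.1 hrle (hamin r hrIcc)
end Convex


lemma jensen_quad {B : Matrix (Fin n) (Fin n) ℂ} (hB : B.IsHermitian) {f : ℝ → ℝ}
    (hf : ConvexOn ℝ Set.univ f) (hf0 : f 0 ≤ 0) (y : Fin n → ℂ)
    (hy : (∑ i, Complex.normSq (y i)) ≤ 1) :
    f (Complex.re (star y ⬝ᵥ (B *ᵥ y))) ≤ Complex.re (star y ⬝ᵥ (hB.cfc f *ᵥ y)) := by
  set Q : Matrix (Fin n) (Fin n) ℂ := (hB.eigenvectorUnitary : Matrix (Fin n) (Fin n) ℂ) with hQdef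
  have hQ : Q ∈ Matrix.unitaryGroup (Fin n) ℂ := hB.eigenvectorUnitary.2
  set d := hB.eigenvalues with hddef
  set z := Qᴴ *ᵥ y with hzdef
  set w : Fin n → ℝ := fun i => Complex.normSq (z i) with hwdef
  have hzy : (∑ i, w i) = ∑ i, Complex.normSq (y i) := sum_normSq_eq hQ y
  have hquadB : Complex.re (star y ⬝ᵥ (B *ᵥ y)) = ∑ i, d i * w i := by
    conv_lhs => rw [hB.spectral_theorem]
    simp only [Unitary.conjStarAlgAut_apply, Unitary.coe_star, Matrix.star_eq_conjTranspose]
    rw [dot_conj]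
    rw [show ((RCLike.ofReal ∘ hB.eigenvalues : Fin n → ℂ)) = Complex.ofReal ∘ d from rfl]
    rw [dot_diag]
    simp [Complex.ofReal_re]
    rfl
  have hquadF : Complex.re (star y ⬝ᵥ (hB.cfc f *ᵥ y)) = ∑ i, f (d i) * w i := by
    conv_lhs => rw [cfc_eq' hB f]
    rw [dot_conj, dot_diag]
    simp only [Complex.ofReal_re, Function.comp_apply]
    rfl
  rw [hquadB, hquadF]
  -- Jensen over Option (Fin n)
  set W : Option (Fin n) → ℝ := fun o => o.elim (1 - ∑ i, w i) w with hWdef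
  set p : Option (Fin n) → ℝ := fun o => o.elim 0 d with hpdef
  have hW0 : ∀ o ∈ (Finset.univ : Finset (Option (Fin n))), 0 ≤ W o := by
    rintro (_ | i) _
    · simp only [hWdef, Option.elim]
      rw [hzy]; linarith
    · exact Complex.normSq_nonneg _
  have hW1 : ∑ o : Option (Fin n), W o = 1 := by
    rw [Fintype.sum_option]
    simp only [hWdef, Option.elim]
    ring
  have hmem : ∀ o ∈ (Finset.univ : Finset (Option (Fin n))), p o ∈ Set.univ :=
    fun _ _ => Set.mem_univ _
  have hj := hf.map_sum_le hW0 hW1 hmem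
  have h1 : ∑ o : Option (Fin n), W o • p o = ∑ i, d i * w i := by
    rw [Fintype.sum_option]
    simp only [hWdef, hpdef, Option.elim, smul_eq_mul, mul_zero, zero_add]
    exact Finset.sum_congr rfl fun i _ => mul_comm _ _
  have h2 : ∑ o : Option (Fin n), W o * f (p o) ≤ ∑ i, f (d i) * w i := by
    rw [Fintype.sum_option]
    simp only [hWdef, hpdef, Option.elim]
    have : (1 - ∑ i, w i) * f 0 ≤ 0 := by
      apply mul_nonpos_of_nonneg_of_nonpos _ hf0
      rw [hzy]; linarith
    calc (1 - ∑ i, w i) * f 0 + ∑ i, w i * f (d i)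
        ≤ ∑ i, w i * f (d i) := by linarith
      _ = ∑ i, f (d i) * w i := Finset.sum_congr rfl fun i _ => mul_comm _ _
  calc f (∑ i, d i * w i) = f (∑ o : Option (Fin n), W o • p o) := by rw [h1]
    _ ≤ ∑ o : Option (Fin n), W o * f (p o) := hj
    _ ≤ ∑ i, f (d i) * w i := h2

lemma dot_smul_real (M : Matrix (Fin n) (Fin n) ℂ) (s : ℝ) (x : Fin n → ℂ) :
    star (((s : ℂ)) • x) ⬝ᵥ (M *ᵥ ((s : ℂ) • x)) = ((s^2 : ℝ) : ℂ) * (star x ⬝ᵥ (M *ᵥ x)) := by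
  rw [star_smul, mulVec_smul, smul_dotProduct, dotProduct_smul]
  rw [smul_eq_mul, smul_eq_mul, RCLike.star_def, Complex.conj_ofReal]
  push_cast
  ring

lemma sum_normSq_smul (s : ℝ) (x : Fin n → ℂ) :
    (∑ i, Complex.normSq (((s : ℂ) • x) i)) = s^2 * ∑ i, Complex.normSq (x i) := by
  rw [Finset.mul_sum]
  refine Finset.sum_congr rfl fun i _ => ?_
  simp [Complex.normSq_mul, Complex.normSq_ofReal, sq]

/-- Homogeneous key inequality: for a contraction `Z` and any `x ≠ 0`,
`t * f(⟨x,Cx⟩/t) ≤ ⟨x,Yx⟩` where `t = ‖x‖²`. -/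
lemma key_rayleigh {f : ℝ → ℝ} (hf : ConvexOn ℝ Set.univ f) (hf0 : f 0 ≤ 0)
    {A : Matrix (Fin n) (Fin n) ℂ} (hA : A.IsHermitian)
    {Z : Matrix (Fin n) (Fin n) ℂ} (hZ : (1 - Zᴴ * Z).PosSemidef)
    (x : Fin n → ℂ) (hx : 0 < ∑ i, Complex.normSq (x i)) :
    (∑ i, Complex.normSq (x i)) *
        f ((∑ i, Complex.normSq (x i))⁻¹ * Complex.re (star x ⬝ᵥ ((Zᴴ * A * Z) *ᵥ x)))
      ≤ Complex.re (star x ⬝ᵥ ((Zᴴ * (hA.cfc f) * Z) *ᵥ x)) := by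
  set t := ∑ i, Complex.normSq (x i) with htdef
  set s : ℝ := (Real.sqrt t)⁻¹ with hsdef
  have hst : s^2 * t = 1 := by
    rw [hsdef, ← Real.sqrt_inv, Real.sq_sqrt (by positivity)]
    field_simp
  set x' : Fin n → ℂ := (s : ℂ) • x with hx'def
  -- the normalized vector
  have hy : ∑ i, Complex.normSq ((Z *ᵥ x') i) ≤ 1 := by
    have h0 := hZ.dotProduct_mulVec_nonneg x'
    rw [sub_mulVec, one_mulVec, dotProduct_sub] at h0
    have hzz : star x' ⬝ᵥ ((Zᴴ * Z) *ᵥ x') = star (Z *ᵥ x') ⬝ᵥ (Z *ᵥ x') := by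
      have := dot_conj Zᴴ 1 x'
      rw [mul_one, conjTranspose_conjTranspose, one_mulVec] at this
      exact this
    rw [hzz, dot_self', dot_self'] at h0
    rw [← Complex.ofReal_sub, Complex.zero_le_real, sub_nonneg] at h0
    calc (∑ i, Complex.normSq ((Z *ᵥ x') i)) ≤ ∑ i, Complex.normSq (x' i) := h0
      _ = s^2 * t := sum_normSq_smul s x
      _ = 1 := hst
  have hkey := jensen_quad hA hf hf0 (Z *ᵥ x') hy
  -- rewrite inner products through Z
  have e1 : star x' ⬝ᵥ ((Zᴴ * A * Z) *ᵥ x') = star (Z *ᵥ x') ⬝ᵥ (A *ᵥ (Z *ᵥ x')) := by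
    have := dot_conj Zᴴ A x'
    rwa [conjTranspose_conjTranspose] at this
  have e2 : star x' ⬝ᵥ ((Zᴴ * (hA.cfc f) * Z) *ᵥ x') =
      star (Z *ᵥ x') ⬝ᵥ ((hA.cfc f) *ᵥ (Z *ᵥ x')) := by
    have := dot_conj Zᴴ (hA.cfc f) x'
    rwa [conjTranspose_conjTranspose] at this
  rw [← e1, ← e2, hx'def, dot_smul_real, dot_smul_real] at hkey
  rw [Complex.mul_re, Complex.ofReal_re, Complex.ofReal_im, Complex.mul_re,
    Complex.ofReal_re, Complex.ofReal_im] at hkey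
  simp only [zero_mul, sub_zero] at hkey
  have hs2 : s^2 = t⁻¹ := by
    field_simp at hst ⊢
    nlinarith [hst]
  rw [hs2] at hkey
  have ht' : (0:ℝ) < t := hx
  calc t * f (t⁻¹ * (star x ⬝ᵥ ((Zᴴ * A * Z) *ᵥ x)).re)
      = t * f (t⁻¹ * (star x ⬝ᵥ ((Zᴴ * A * Z) *ᵥ x)).re) := rfl
    _ ≤ t * (t⁻¹ * (star x ⬝ᵥ ((Zᴴ * (hA.cfc f) * Z) *ᵥ x)).re) := by
        apply mul_le_mul_of_nonneg_left _ (le_of_lt ht')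
        exact hkey
    _ = (star x ⬝ᵥ ((Zᴴ * (hA.cfc f) * Z) *ᵥ x)).re := by field_simp

noncomputable def coordKer (Q : Matrix (Fin n) (Fin n) ℂ) (s : Finset (Fin n)) :
    Submodule ℂ (Fin n → ℂ) :=
  LinearMap.ker ((LinearMap.funLeft ℂ ℂ (Subtype.val : {i // i ∉ s} → Fin n)).comp
    (Matrix.mulVecLin Qᴴ))

lemma mem_coordKer {Q : Matrix (Fin n) (Fin n) ℂ} {s : Finset (Fin n)} {x : Fin n → ℂ} :
    x ∈ coordKer Q s ↔ ∀ i ∉ s, (Qᴴ *ᵥ x) i = 0 := by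
  rw [coordKer, LinearMap.mem_ker, LinearMap.comp_apply]
  constructor
  · intro h i hi
    exact congrFun h ⟨i, hi⟩
  · intro h
    funext ⟨i, hi⟩
    exact h i hi

lemma finrank_coordKer {Q : Matrix (Fin n) (Fin n) ℂ}
    (hQ : Q ∈ Matrix.unitaryGroup (Fin n) ℂ) (s : Finset (Fin n)) :
    Module.finrank ℂ (coordKer Q s) = s.card := by
  set φ := (LinearMap.funLeft ℂ ℂ (Subtype.val : {i // i ∉ s} → Fin n)).comp
    (Matrix.mulVecLin Qᴴ) with hφ
  have hsurj : Function.Surjective φ := by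
    rw [hφ, LinearMap.coe_comp]
    apply Function.Surjective.comp
    · exact LinearMap.funLeft_surjective_of_injective ℂ ℂ _ Subtype.val_injective
    · intro v
      refine ⟨Q *ᵥ v, ?_⟩
      rw [Matrix.mulVecLin_apply]
      exact unitary_mulVec_conjTranspose hQ v
  have hrank := LinearMap.finrank_range_add_finrank_ker φ
  rw [LinearMap.range_eq_top.2 hsurj] at hrank
  have h1 : Module.finrank ℂ (⊤ : Submodule ℂ ({i // i ∉ s} → ℂ)) =
      Fintype.card {i // i ∉ s} := by
    rw [finrank_top, Module.finrank_pi]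
  have h2 : Fintype.card {i // i ∉ s} = n - s.card := by
    rw [Fintype.card_subtype_compl]
    congr 1
    · exact Fintype.card_fin n
    · simp [Fintype.card_subtype]
  have h3 : Module.finrank ℂ (Fin n → ℂ) = n := by simp
  have hcard : s.card ≤ n := by
    have := Finset.card_le_univ s
    simpa using this
  have : coordKer Q s = LinearMap.ker φ := rfl
  rw [this]
  omega

lemma count_eig_ge {Bm : Matrix (Fin n) (Fin n) ℂ} (hB : Bm.IsHermitian) (c : ℝ)
    (W : Submodule ℂ (Fin n → ℂ))
    (hW : ∀ x ∈ W, c * (∑ i, Complex.normSq (x i)) ≤ Complex.re (star x ⬝ᵥ (Bm *ᵥ x))) :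
    Module.finrank ℂ W ≤ (Finset.univ.filter fun i => c ≤ hB.eigenvalues i).card := by
  by_contra hcon
  push_neg at hcon
  set Q : Matrix (Fin n) (Fin n) ℂ := (hB.eigenvectorUnitary : Matrix (Fin n) (Fin n) ℂ) with hQdef
  have hQ : Q ∈ Matrix.unitaryGroup (Fin n) ℂ := hB.eigenvectorUnitary.2
  set d := hB.eigenvalues with hddef
  set sLT := Finset.univ.filter (fun i => d i < c) with hsLT
  set T := coordKer Q sLT with hT
  have hrankT : Module.finrank ℂ T = sLT.card := finrank_coordKer hQ sLT
  have hcards : sLT.card + (Finset.univ.filter fun i => c ≤ d i).card = n := by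
    have e : Finset.univ.filter (fun i => ¬ d i < c) = Finset.univ.filter (fun i => c ≤ d i) := by
      apply Finset.filter_congr; intro i _; simp [not_lt]
    have h := Finset.card_filter_add_card_filter_not (s := (Finset.univ : Finset (Fin n)))
      (p := fun i => d i < c)
    rw [e] at h
    simpa [Finset.card_univ] using h
  -- dimension count
  have hWT : Module.finrank ℂ W + Module.finrank ℂ T
      = Module.finrank ℂ ↥(W ⊔ T) + Module.finrank ℂ ↥(W ⊓ T) :=
    (Submodule.finrank_sup_add_finrank_inf_eq W T).symm
  have hle : Module.finrank ℂ ↥(W ⊔ T) ≤ n := by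
    have := Submodule.finrank_le (W ⊔ T)
    simpa using this
  have hpos : 0 < Module.finrank ℂ ↥(W ⊓ T) := by omega
  have hne : W ⊓ T ≠ ⊥ := by
    intro h
    rw [h, finrank_bot] at hpos
    exact lt_irrefl 0 hpos
  obtain ⟨x, hxWT, hx0⟩ := Submodule.exists_mem_ne_zero_of_ne_bot hne
  have hxW : x ∈ W := hxWT.1
  have hxT : x ∈ T := hxWT.2
  set z := Qᴴ *ᵥ x with hzdef
  have hzvan : ∀ i, c ≤ d i → z i = 0 := by
    intro i hi
    refine mem_coordKer.mp hxT i ?_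
    simp [hsLT, not_lt.2 hi]
  have hz0 : z ≠ 0 := by
    intro h
    apply hx0
    have hx' : Q *ᵥ z = x := unitary_mulVec_conjTranspose' hQ x
    rw [h, mulVec_zero] at hx'
    exact hx'.symm
  obtain ⟨i0, hi0⟩ : ∃ i, z i ≠ 0 := by
    by_contra hall
    push_neg at hall
    exact hz0 (funext hall)
  have hi0lt : d i0 < c := by
    by_contra hge
    exact hi0 (hzvan i0 (not_lt.1 hge))
  -- compute the quadratic form
  have hquad : Complex.re (star x ⬝ᵥ (Bm *ᵥ x)) = ∑ i, d i * Complex.normSq (z i) := by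
    conv_lhs => rw [hB.spectral_theorem]
    simp only [Unitary.conjStarAlgAut_apply, Unitary.coe_star, Matrix.star_eq_conjTranspose]
    rw [dot_conj]
    rw [show ((RCLike.ofReal ∘ hB.eigenvalues : Fin n → ℂ)) = Complex.ofReal ∘ d from rfl]
    rw [dot_diag]
    simp only [Complex.ofReal_re]
    rfl
  have hnorm : (∑ i, Complex.normSq (x i)) = ∑ i, Complex.normSq (z i) :=
    (sum_normSq_eq hQ x).symm
  have hstrict : ∑ i, d i * Complex.normSq (z i) < ∑ i, c * Complex.normSq (z i) := by
    apply Finset.sum_lt_sum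
    · intro i _
      rcases le_or_gt c (d i) with h | h
      · rw [hzvan i h]; simp
      · exact mul_le_mul_of_nonneg_right h.le (Complex.normSq_nonneg _)
    · refine ⟨i0, Finset.mem_univ _, ?_⟩
      have : 0 < Complex.normSq (z i0) := by
        rcases (Complex.normSq_pos (z := z i0)).2 hi0 with h
        exact h
      exact mul_lt_mul_of_pos_right hi0lt this
  have hWx := hW x hxW
  rw [hquad, hnorm] at hWx
  rw [← Finset.mul_sum] at hstrict
  linarith

lemma exists_unitary_conj_posSemidef
    {B M R T : Matrix (Fin n) (Fin n) ℂ}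
    (hR : R ∈ Matrix.unitaryGroup (Fin n) ℂ) (hT : T ∈ Matrix.unitaryGroup (Fin n) ℂ)
    {β γ : Fin n → ℝ}
    (hB : B = R * diagonal (Complex.ofReal ∘ β) * Rᴴ)
    (hM : M = T * diagonal (Complex.ofReal ∘ γ) * Tᴴ)
    (hcount : ∀ c : ℝ, (Finset.univ.filter (fun i => c ≤ β i)).card ≤
      (Finset.univ.filter (fun i => c ≤ γ i)).card) :
    ∃ W ∈ Matrix.unitaryGroup (Fin n) ℂ, (W * M * Wᴴ - B).PosSemidef := by
  set σ := Tuple.sort β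
  set τ := Tuple.sort γ
  have hβσ : Monotone (β ∘ σ) := Tuple.monotone_sort β
  have hγτ : Monotone (γ ∘ τ) := Tuple.monotone_sort γ
  have hpt : ∀ j, (β ∘ σ) j ≤ (γ ∘ τ) j := by
    refine monotone_le_of_count_le hβσ hγτ fun c => ?_
    have h1 := count_comp_perm β σ c
    have h2 := count_comp_perm γ τ c
    have := hcount c
    simp only [Function.comp_apply]
    omega
  set R' := R * ((σ⁻¹).permMatrix ℂ) with hR'
  set T' := T * ((τ⁻¹).permMatrix ℂ) with hT'
  have hR'u : R' ∈ Matrix.unitaryGroup (Fin n) ℂ :=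
    mul_mem hR (permMatrix_mem_unitaryGroup _)
  have hT'u : T' ∈ Matrix.unitaryGroup (Fin n) ℂ :=
    mul_mem hT (permMatrix_mem_unitaryGroup _)
  clear_value R' T'
  have hBd : B = R' * diagonal (Complex.ofReal ∘ β ∘ σ) * R'ᴴ := by
    rw [hR', conjTranspose_mul, hB, ← perm_conj_diagonal σ (Complex.ofReal ∘ β)]
    simp only [Function.comp_assoc]
    noncomm_ring
  have hMd : M = T' * diagonal (Complex.ofReal ∘ γ ∘ τ) * T'ᴴ := by
    rw [hT', conjTranspose_mul, hM, ← perm_conj_diagonal τ (Complex.ofReal ∘ γ)]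
    simp only [Function.comp_assoc]
    noncomm_ring
  refine ⟨R' * T'ᴴ, mul_mem hR'u ((Matrix.star_eq_conjTranspose T') ▸ Unitary.star_mem hT'u), ?_⟩
  have hTT : T'ᴴ * T' = 1 := by
    have := Matrix.mem_unitaryGroup_iff'.mp hT'u
    rwa [Matrix.star_eq_conjTranspose] at this
  have key : (R' * T'ᴴ) * M * (R' * T'ᴴ)ᴴ - B
      = R' * (diagonal (Complex.ofReal ∘ γ ∘ τ) - diagonal (Complex.ofReal ∘ β ∘ σ)) * R'ᴴ := by
    rw [hMd, hBd, conjTranspose_mul, conjTranspose_conjTranspose]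
    rw [Matrix.mul_sub, Matrix.sub_mul]
    congr 1
    calc R' * T'ᴴ * (T' * diagonal (Complex.ofReal ∘ γ ∘ τ) * T'ᴴ) * (T' * R'ᴴ)
        = R' * (T'ᴴ * T') * diagonal (Complex.ofReal ∘ γ ∘ τ) * (T'ᴴ * T') * R'ᴴ := by
          noncomm_ring
      _ = R' * diagonal (Complex.ofReal ∘ γ ∘ τ) * R'ᴴ := by rw [hTT]; noncomm_ring
  rw [key]
  apply Matrix.PosSemidef.mul_mul_conjTranspose_same
  rw [Matrix.diagonal_sub]
  apply Matrix.PosSemidef.diagonal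
  intro i
  simp only [Pi.zero_apply, Pi.sub_apply, Function.comp_apply, ← Complex.ofReal_sub,
    Complex.zero_le_real]
  have := hpt i
  simp only [Function.comp_apply] at this
  linarith

end Aux

/-- **Theorem 2.1 (Bourin).** If `f` is convex with `f 0 ≤ 0`, `A` is Hermitian and `Z`
is a contraction (`Zᴴ Z ≤ I`), then with `X = f(Zᴴ A Z)` and `Y = Zᴴ f(A) Z` there are
unitaries `U, V` such that `X ≤ (U Y Uᴴ + V Y Vᴴ)/2` in the Loewner order. -/
theorem cfc_contraction_le_mean_unitary_conj
    {n : ℕ} (f : ℝ → ℝ) (hf : ConvexOn ℝ Set.univ f) (hf0 : f 0 ≤ 0)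
    (A : Matrix (Fin n) (Fin n) ℂ) (hA : A.IsHermitian)
    (Z : Matrix (Fin n) (Fin n) ℂ) (hZ : (1 - Zᴴ * Z).PosSemidef) :
    ∃ U V : Matrix (Fin n) (Fin n) ℂ,
      U ∈ Matrix.unitaryGroup (Fin n) ℂ ∧ V ∈ Matrix.unitaryGroup (Fin n) ℂ ∧
      ((2 : ℝ)⁻¹ • (U * (Zᴴ * hA.cfc f * Z) * Uᴴ + V * (Zᴴ * hA.cfc f * Z) * Vᴴ) -
        (isHermitian_conjTranspose_mul_mul Z hA).cfc f).PosSemidef := by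
  classical
  have hC : (Zᴴ * A * Z).IsHermitian := isHermitian_conjTranspose_mul_mul Z hA
  set Y : Matrix (Fin n) (Fin n) ℂ := Zᴴ * hA.cfc f * Z with hYdef
  have hY : Y.IsHermitian := isHermitian_conjTranspose_mul_mul Z (isHermitian_cfc hA f)
  set Q : Matrix (Fin n) (Fin n) ℂ := (hC.eigenvectorUnitary : Matrix (Fin n) (Fin n) ℂ)
    with hQdef
  have hQ : Q ∈ Matrix.unitaryGroup (Fin n) ℂ := hC.eigenvectorUnitary.2
  set d : Fin n → ℝ := hC.eigenvalues with hddef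
  have hCd : Zᴴ * A * Z = Q * diagonal (Complex.ofReal ∘ d) * Qᴴ := hC.spectral_theorem
  set β : Fin n → ℝ := fun i => f (d i) with hβdef
  -- bounds for the eigenvalues
  set D : Finset ℝ := insert (0:ℝ) (Finset.image d Finset.univ) with hDdef
  have hDne : D.Nonempty := ⟨0, Finset.mem_insert_self _ _⟩
  set lo := D.min' hDne with hlodef
  set hi := D.max' hDne with hhidef
  have hlohi : lo ≤ hi :=
    le_trans (D.min'_le 0 (Finset.mem_insert_self _ _)) (D.le_max' 0 (Finset.mem_insert_self _ _))
  have hd_mem : ∀ i, d i ∈ Set.Icc lo hi := by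
    intro i
    have hmem : d i ∈ D := Finset.mem_insert_of_mem (Finset.mem_image_of_mem d (Finset.mem_univ i))
    exact ⟨D.min'_le _ hmem, D.le_max' _ hmem⟩
  -- a minimizer of f on [lo, hi]
  have hcont : ContinuousOn f (Set.Icc lo hi) :=
    (hf.continuousOn isOpen_univ).mono (Set.subset_univ _)
  obtain ⟨a, haIcc, hamin'⟩ :=
    isCompact_Icc.exists_isMinOn (Set.nonempty_Icc.2 hlohi) hcont
  have hamin : ∀ x ∈ Set.Icc lo hi, f a ≤ f x := fun x hx => hamin' hx
  -- the sign unitary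
  set ε : Fin n → ℂ := fun i => if a ≤ d i then 1 else -1 with hεdef
  have hstarε : star ε = ε := by
    funext i
    by_cases h : a ≤ d i <;> simp [hεdef, h]
  have hεsq : ∀ i, star (ε i) * ε i = 1 := by
    intro i
    by_cases h : a ≤ d i <;> simp [hεdef, h]
  have hdiagε : diagonal ε ∈ Matrix.unitaryGroup (Fin n) ℂ := by
    rw [Matrix.mem_unitaryGroup_iff', Matrix.star_eq_conjTranspose, Matrix.diagonal_conjTranspose,
      Matrix.diagonal_mul_diagonal]
    have he : (fun i => (star ε) i * ε i) = fun _ : Fin n => (1:ℂ) := funext fun i => hεsq i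
    rw [he]
    exact Matrix.diagonal_one
  set S : Matrix (Fin n) (Fin n) ℂ := Q * diagonal ε * Qᴴ with hSdef
  have hQH : Qᴴ ∈ Matrix.unitaryGroup (Fin n) ℂ := Unitary.star_mem hQ
  have hSu : S ∈ Matrix.unitaryGroup (Fin n) ℂ := mul_mem (mul_mem hQ hdiagε) hQH
  have hSH : Sᴴ = S := by
    rw [hSdef]
    simp only [Matrix.conjTranspose_mul, Matrix.conjTranspose_conjTranspose,
      Matrix.diagonal_conjTranspose, hstarε, Matrix.mul_assoc]
  set M : Matrix (Fin n) (Fin n) ℂ := (2:ℝ)⁻¹ • (Y + S * Y * Sᴴ) with hMdef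
  have hSYS : (S * Y * Sᴴ).IsHermitian := by
    have h := isHermitian_conjTranspose_mul_mul Sᴴ hY
    rwa [conjTranspose_conjTranspose] at h
  have hM : M.IsHermitian := isHermitian_half_smul (hY.add hSYS)
  set T : Matrix (Fin n) (Fin n) ℂ := (hM.eigenvectorUnitary : Matrix (Fin n) (Fin n) ℂ)
    with hTdef
  have hT : T ∈ Matrix.unitaryGroup (Fin n) ℂ := hM.eigenvectorUnitary.2
  set γ : Fin n → ℝ := hM.eigenvalues with hγdef
  have hMd : M = T * diagonal (Complex.ofReal ∘ γ) * Tᴴ := hM.spectral_theorem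
  -- the key quadratic bound on the coordinate subspaces
  have hquadbound : ∀ c : ℝ, ∀ x ∈ coordKer Q (Finset.univ.filter (fun i => c ≤ β i)),
      c * (∑ i, Complex.normSq (x i)) ≤ Complex.re (star x ⬝ᵥ (M *ᵥ x)) := by
    intro c x hx
    set sc := Finset.univ.filter (fun i => c ≤ β i) with hscdef
    set z : Fin n → ℂ := Qᴴ *ᵥ x with hzdef
    have hzs : ∀ i ∉ sc, z i = 0 := mem_coordKer.mp hx
    set zp : Fin n → ℂ := fun i => if a ≤ d i then z i else 0 with hzpdef
    set zm : Fin n → ℂ := fun i => if a ≤ d i then 0 else z i with hzmdef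
    have hzpm : zp + zm = z := by
      funext i
      by_cases h : a ≤ d i <;> simp [hzpdef, hzmdef, h]
    set xp : Fin n → ℂ := Q *ᵥ zp with hxpdef
    set xm : Fin n → ℂ := Q *ᵥ zm with hxmdef
    have hxsum : xp + xm = x := by
      rw [hxpdef, hxmdef, ← mulVec_add, hzpm, hzdef]
      exact unitary_mulVec_conjTranspose' hQ x
    have hSx : S *ᵥ x = xp - xm := by
      rw [hSdef, ← mulVec_mulVec, ← mulVec_mulVec, ← hzdef]
      have : diagonal ε *ᵥ z = zp - zm := by
        funext i
        rw [mulVec_diagonal]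
        by_cases h : a ≤ d i <;> simp [hεdef, hzpdef, hzmdef, h]
      rw [this, mulVec_sub]
    -- quadratic form of M splits
    have hrewrite : Complex.re (star x ⬝ᵥ (M *ᵥ x)) =
        Complex.re (star xp ⬝ᵥ (Y *ᵥ xp)) + Complex.re (star xm ⬝ᵥ (Y *ᵥ xm)) := by
      rw [hMdef, smul_mulVec, dotProduct_smul]
      have hconj : star x ⬝ᵥ ((S * Y * Sᴴ) *ᵥ x) =
          star (Sᴴ *ᵥ x) ⬝ᵥ (Y *ᵥ (Sᴴ *ᵥ x)) := dot_conj S Y x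
      have hpar : star x ⬝ᵥ ((Y + S * Y * Sᴴ) *ᵥ x)
          = 2 * (star xp ⬝ᵥ (Y *ᵥ xp)) + 2 * (star xm ⬝ᵥ (Y *ᵥ xm)) := by
        rw [add_mulVec, dotProduct_add, hconj, hSH, hSx, ← hxsum]
        have := dot_parallelogram Y xp xm
        rw [this]
      rw [hpar]
      rw [Complex.real_smul, Complex.mul_re, Complex.ofReal_re, Complex.ofReal_im]
      simp only [zero_mul, sub_zero, Complex.add_re, Complex.mul_re]
      norm_num
      ring
    -- norms split
    have hnz : ∀ i, Complex.normSq (z i) = Complex.normSq (zp i) + Complex.normSq (zm i) := by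
      intro i
      by_cases h : a ≤ d i <;> simp [hzpdef, hzmdef, h]
    have hnormx : (∑ i, Complex.normSq (x i))
        = (∑ i, Complex.normSq (zp i)) + ∑ i, Complex.normSq (zm i) := by
      rw [← sum_normSq_eq hQ x, ← hzdef]
      rw [Finset.sum_congr rfl (fun i _ => hnz i), Finset.sum_add_distrib]
    -- bound for the increasing part
    have bound_p : c * (∑ i, Complex.normSq (zp i)) ≤ Complex.re (star xp ⬝ᵥ (Y *ᵥ xp)) := by
      rcases eq_or_ne zp 0 with h0 | h0
      · rw [h0]
        simp [hxpdef, h0]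
      · set t := ∑ i, Complex.normSq (zp i) with htdef
        have ht : 0 < t := by
          obtain ⟨i0, hi0⟩ : ∃ i, zp i ≠ 0 := by
            by_contra hall; push_neg at hall; exact h0 (funext hall)
          apply Finset.sum_pos' (fun i _ => Complex.normSq_nonneg _)
          exact ⟨i0, Finset.mem_univ _, Complex.normSq_pos.2 hi0⟩
        have hsums : (∑ i, Complex.normSq (xp i)) = t := by
          rw [hxpdef]; exact sum_normSq_mulVec hQ zp
        have hkr := key_rayleigh hf hf0 hA hZ xp (by rw [hsums]; exact ht)
        rw [← hYdef] at hkr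
        have hray : Complex.re (star xp ⬝ᵥ ((Zᴴ * A * Z) *ᵥ xp))
            = ∑ i, d i * Complex.normSq (zp i) := by
          conv_lhs => rw [hCd]
          rw [dot_conj]
          rw [show Qᴴ *ᵥ xp = zp from unitary_mulVec_conjTranspose hQ zp]
          rw [dot_diag, Complex.ofReal_re]
        rw [hsums, hray] at hkr
        have hc : c ≤ f (t⁻¹ * ∑ i, d i * Complex.normSq (zp i)) := by
          have hb := branch_bound_right (n := n) hf haIcc hamin (v := d)
            (w := fun i => t⁻¹ * Complex.normSq (zp i)) hd_mem
            (fun i => mul_nonneg (by positivity) (Complex.normSq_nonneg _))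
            (by rw [← Finset.mul_sum]; field_simp; rfl)
            (by
              intro i hwi
              have hzpne : zp i ≠ 0 := by
                intro h
                exact hwi (by simp [h])
              have had : a ≤ d i := by
                by_contra h
                apply hzpne
                simp [hzpdef, h]
              have hzne : z i ≠ 0 := by
                intro h
                apply hzpne
                simp [hzpdef, had, h]
              have hisc : i ∈ sc := by
                by_contra h
                exact hzne (hzs i h)
              refine ⟨had, ?_⟩
              have := Finset.mem_filter.mp hisc
              exact this.2)
          calc c ≤ f (∑ i, (t⁻¹ * Complex.normSq (zp i)) * d i) := hb
            _ = f (t⁻¹ * ∑ i, d i * Complex.normSq (zp i)) := by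
                congr 1
                rw [Finset.mul_sum]
                exact Finset.sum_congr rfl fun i _ => by ring
        calc c * t ≤ t * f (t⁻¹ * ∑ i, d i * Complex.normSq (zp i)) := by
              rw [mul_comm]
              exact mul_le_mul_of_nonneg_left hc ht.le
          _ ≤ Complex.re (star xp ⬝ᵥ (Y *ᵥ xp)) := hkr
    -- bound for the decreasing part
    have bound_m : c * (∑ i, Complex.normSq (zm i)) ≤ Complex.re (star xm ⬝ᵥ (Y *ᵥ xm)) := by
      rcases eq_or_ne zm 0 with h0 | h0
      · rw [h0]
        simp [hxmdef, h0]
      · set t := ∑ i, Complex.normSq (zm i) with htdef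
        have ht : 0 < t := by
          obtain ⟨i0, hi0⟩ : ∃ i, zm i ≠ 0 := by
            by_contra hall; push_neg at hall; exact h0 (funext hall)
          apply Finset.sum_pos' (fun i _ => Complex.normSq_nonneg _)
          exact ⟨i0, Finset.mem_univ _, Complex.normSq_pos.2 hi0⟩
        have hsums : (∑ i, Complex.normSq (xm i)) = t := by
          rw [hxmdef]; exact sum_normSq_mulVec hQ zm
        have hkr := key_rayleigh hf hf0 hA hZ xm (by rw [hsums]; exact ht)
        rw [← hYdef] at hkr
        have hray : Complex.re (star xm ⬝ᵥ ((Zᴴ * A * Z) *ᵥ xm))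
            = ∑ i, d i * Complex.normSq (zm i) := by
          conv_lhs => rw [hCd]
          rw [dot_conj]
          rw [show Qᴴ *ᵥ xm = zm from unitary_mulVec_conjTranspose hQ zm]
          rw [dot_diag, Complex.ofReal_re]
        rw [hsums, hray] at hkr
        have hc : c ≤ f (t⁻¹ * ∑ i, d i * Complex.normSq (zm i)) := by
          have hb := branch_bound_left (n := n) hf haIcc hamin (v := d)
            (w := fun i => t⁻¹ * Complex.normSq (zm i)) hd_mem
            (fun i => mul_nonneg (by positivity) (Complex.normSq_nonneg _))
            (by rw [← Finset.mul_sum]; field_simp; rfl)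
            (by
              intro i hwi
              have hzmne : zm i ≠ 0 := by
                intro h
                exact hwi (by simp [h])
              have had : ¬ a ≤ d i := by
                by_contra h
                apply hzmne
                simp [hzmdef, h]
              have hzne : z i ≠ 0 := by
                intro h
                apply hzmne
                simp [hzmdef, had, h]
              have hisc : i ∈ sc := by
                by_contra h
                exact hzne (hzs i h)
              refine ⟨le_of_not_ge had, ?_⟩
              have := Finset.mem_filter.mp hisc
              exact this.2)
          calc c ≤ f (∑ i, (t⁻¹ * Complex.normSq (zm i)) * d i) := hb
            _ = f (t⁻¹ * ∑ i, d i * Complex.normSq (zm i)) := by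
                congr 1
                rw [Finset.mul_sum]
                exact Finset.sum_congr rfl fun i _ => by ring
        calc c * t ≤ t * f (t⁻¹ * ∑ i, d i * Complex.normSq (zm i)) := by
              rw [mul_comm]
              exact mul_le_mul_of_nonneg_left hc ht.le
          _ ≤ Complex.re (star xm ⬝ᵥ (Y *ᵥ xm)) := hkr
    rw [hrewrite, hnormx, mul_add]
    exact add_le_add bound_p bound_m
  -- counting inequality
  have hcount : ∀ c : ℝ, (Finset.univ.filter (fun i => c ≤ β i)).card ≤
      (Finset.univ.filter (fun i => c ≤ γ i)).card := by
    intro c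
    have h := count_eig_ge hM c (coordKer Q (Finset.univ.filter (fun i => c ≤ β i)))
      (hquadbound c)
    rwa [finrank_coordKer hQ] at h
  -- conclude via the sorting lemma
  have hXd : (isHermitian_conjTranspose_mul_mul Z hA).cfc f
      = Q * diagonal (Complex.ofReal ∘ β) * Qᴴ := cfc_eq' hC f
  obtain ⟨W, hWu, hWpsd⟩ := exists_unitary_conj_posSemidef hQ hT hXd hMd hcount
  refine ⟨W, W * S, hWu, mul_mem hWu hSu, ?_⟩
  have heq : (2 : ℝ)⁻¹ • (W * Y * Wᴴ + (W * S) * Y * (W * S)ᴴ) = W * M * Wᴴ := by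
    rw [hMdef, Matrix.mul_smul, Matrix.smul_mul]
    congr 1
    simp only [Matrix.conjTranspose_mul, hSH, Matrix.mul_add, Matrix.add_mul, Matrix.mul_assoc]
  rw [heq]
  exact hWpsd
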